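/- For every real r > 0, the function \tilde{F}(r) := -e^{8r} - 16r^2 e^{6r} + 8r e^{6r} + 16r^2 e^{4r} + 2e^{4r} - 16r^2 e^{2r} - 8r e^{2r} - 1 satisfies \tilde{F}''''(r) < 0. -/

import Mathlib

noncomputable def Ftilde : ℝ → ℝ := fun r =>
  -Real.exp (8*r) - 16*r^2*Real.exp (6*r) + 8*r*Real.exp (6*r) + 16*r^2*Real.exp (4*r)
    + 2*Real.exp (4*r) - 16*r^2*Real.exp (2*r) - 8*r*Real.exp (2*r) - 1

private lemma hasDerivAt_poly_exp (a b c k r : ℝ) :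
    HasDerivAt (fun r => (a*r^2+b*r+c)*Real.exp (k*r))
      ((2*a*r+b)*Real.exp (k*r) + (a*r^2+b*r+c)*(k*Real.exp (k*r))) r := by
  have hp : HasDerivAt (fun r : ℝ => a*r^2+b*r+c) (2*a*r+b) r := by
    have h : HasDerivAt (F := ℝ) _ _ r := (((hasDerivAt_pow 2 r).const_mul a).add
      (((hasDerivAt_id r).const_mul b).add_const c))
    convert h using 1
    · funext x; simp; ring
    · push_cast; ring
  have he : HasDerivAt (fun r : ℝ => Real.exp (k*r)) (k*Real.exp (k*r)) r := by
    have h : HasDerivAt (F := ℝ) _ _ r := (Real.hasDerivAt_exp (k*r)).comp r ((hasDerivAt_id r).const_mul k)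
    simpa [mul_comm, Function.comp_def] using h
  exact hp.mul he

noncomputable def PE (a b c k : ℝ) : ℝ → ℝ := fun r => (a*r^2+b*r+c)*Real.exp (k*r)

private lemma hasDerivAt_PE4 (a₁ b₁ c₁ a₂ b₂ c₂ a₃ b₃ c₃ a₄ b₄ c₄ d r : ℝ) :
    HasDerivAt (fun r => PE a₁ b₁ c₁ 8 r + PE a₂ b₂ c₂ 6 r + PE a₃ b₃ c₃ 4 r
        + PE a₄ b₄ c₄ 2 r + d)
      (PE (8*a₁) (2*a₁+8*b₁) (b₁+8*c₁) 8 r + PE (6*a₂) (2*a₂+6*b₂) (b₂+6*c₂) 6 r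
        + PE (4*a₃) (2*a₃+4*b₃) (b₃+4*c₃) 4 r + PE (2*a₄) (2*a₄+2*b₄) (b₄+2*c₄) 2 r) r := by
  have h : HasDerivAt (F := ℝ) _ _ r := ((((hasDerivAt_poly_exp a₁ b₁ c₁ 8 r).add
    (hasDerivAt_poly_exp a₂ b₂ c₂ 6 r)).add
    (hasDerivAt_poly_exp a₃ b₃ c₃ 4 r)).add
    (hasDerivAt_poly_exp a₄ b₄ c₄ 2 r)).add_const d
  simp only [PE]
  convert h using 1
  · rfl
  ring

private lemma deriv_PE4 (a₁ b₁ c₁ a₂ b₂ c₂ a₃ b₃ c₃ a₄ b₄ c₄ d : ℝ) :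
    deriv (fun r => PE a₁ b₁ c₁ 8 r + PE a₂ b₂ c₂ 6 r + PE a₃ b₃ c₃ 4 r
        + PE a₄ b₄ c₄ 2 r + d)
      = fun r => PE (8*a₁) (2*a₁+8*b₁) (b₁+8*c₁) 8 r + PE (6*a₂) (2*a₂+6*b₂) (b₂+6*c₂) 6 r
        + PE (4*a₃) (2*a₃+4*b₃) (b₃+4*c₃) 4 r + PE (2*a₄) (2*a₄+2*b₄) (b₄+2*c₄) 2 r + 0 := by
  funext r
  have h := (hasDerivAt_PE4 a₁ b₁ c₁ a₂ b₂ c₂ a₃ b₃ c₃ a₄ b₄ c₄ d r).deriv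
  rw [h]; ring

private lemma Ftilde_eq : Ftilde = fun r => PE 0 0 (-1) 8 r + PE (-16) 8 0 6 r
    + PE 16 0 2 4 r + PE (-16) (-8) 0 2 r + (-1) := by
  funext r
  simp [Ftilde, PE]
  ring

theorem Ftilde_fourth_deriv_neg :
    ∀ r : ℝ, 0 < r → iteratedDeriv 4 Ftilde r < 0 := by
  intro r hr
  have key : iteratedDeriv 4 Ftilde r = PE 0 0 (-4096) 8 r + PE (-20736) (-17280) 0 6 r
      + PE 4096 8192 3584 4 r + PE (-256) (-1152) (-1024) 2 r + 0 := by
    rw [iteratedDeriv_eq_iterate]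
    show deriv (deriv (deriv (deriv Ftilde))) r = _
    rw [Ftilde_eq, deriv_PE4, deriv_PE4, deriv_PE4, deriv_PE4]
    norm_num
  rw [key]
  simp only [PE]
  have h2 : Real.exp (2*r) > 1 + 2*r := by
    have := Real.add_one_lt_exp (by positivity : 2*r ≠ 0)
    linarith
  have h4 : Real.exp (4*r) = Real.exp (2*r) ^ 2 := by
    rw [← Real.exp_nat_mul]; ring_nf
  have h6 : Real.exp (6*r) = Real.exp (2*r) ^ 3 := by
    rw [← Real.exp_nat_mul]; ring_nf
  have h8 : Real.exp (8*r) = Real.exp (2*r) ^ 4 := by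
    rw [← Real.exp_nat_mul]; ring_nf
  rw [h4, h6, h8]
  set y := Real.exp (2*r) with hy
  have hy0 : 0 < y := Real.exp_pos _
  nlinarith [mul_pos (mul_pos hy0 hy0) (mul_pos hy0 hy0), sq_nonneg (y - 1 - 2*r),
    mul_pos hy0 hr, sq_nonneg r, mul_pos (mul_pos hy0 hy0) hy0,
    mul_pos (mul_pos (mul_pos hy0 hy0) hy0) hr,
    mul_pos (mul_pos hy0 hy0) hr, mul_pos (mul_pos hy0 hr) hr,
    mul_nonneg (mul_nonneg (sq_nonneg y) hy0.le) (sq_nonneg (y - 1 - 2*r))]
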